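/- Given a G-transfer system →, define I_→(H) to be the class of finite H-sets isomorphic to finite disjoint unions of orbits H/K with K → H. Then I_→ is a G-indexing system, and it is the unique indexing system whose associated graph relation equals →. -/

import Mathlib

open Pointwise

/-- Conjugate of a subgroup: `conjS g H = g H g⁻¹`. -/
def conjS {G : Type} [Group G] (g : G) (H : Subgroup G) : Subgroup G :=
  MulAut.conj g • H

/-- The trivial action of a group on a type. -/
def trivialSMul (H : Type) [Group H] (X : Type) : MulAction H X where
  smul := fun _ x => x
  one_smul := fun _ => rfl
  mul_smul := fun _ _ _ => rfl

/-- Application of an explicitly given action. -/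
def actSMul {H X : Type} [Group H] (a : MulAction H X) (h : H) (x : X) : X :=
  letI := a; h • x

/-- Restriction of an action along a group homomorphism. -/
def resAction {K H : Type} [Group K] [Group H] (φ : K →* H) (X : Type)
    (a : MulAction H X) : MulAction K X :=
  letI := a; MulAction.compHom X φ

/-- The disjoint union of two actions. -/
def sumAction {H X Y : Type} [Group H] (aX : MulAction H X) (aY : MulAction H Y) :
    MulAction H (X ⊕ Y) :=
  letI := aX; letI := aY
  { smul := fun h p => Sum.map (fun x => h • x) (fun y => h • y) p
    one_smul := by rintro (x | y) <;> simp
    mul_smul := by rintro h h' (x | y) <;> simp [mul_smul] }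

/-- A map is equivariant for two explicitly given actions. -/
def IsEquivariant {H X Y : Type} [Group H] (aX : MulAction H X)
    (aY : MulAction H Y) (f : X → Y) : Prop :=
  ∀ (h : H) (x : X), f (actSMul aX h x) = actSMul aY h (f x)

/-- The setoid on `H × X` whose quotient is the induced `H`-set
`ind_K^H X = H ×_K X` of a `K`-set `X` along `K ≤ H`. -/
def indSetoid (H : Type) [Group H] (K : Subgroup H) (X : Type)
    (a : MulAction K X) : Setoid (H × X) :=
  letI := a
  { r := fun p q => ∃ k : K, p.1 * k = q.1 ∧ k • q.2 = p.2
    iseqv := by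
      constructor
      · exact fun p => ⟨1, by simp, by simp⟩
      · rintro p q ⟨k, hk1, hk2⟩
        refine ⟨k⁻¹, ?_, ?_⟩
        · rw [← hk1]; simp [mul_assoc]
        · rw [← hk2]; simp
      · rintro p q r ⟨k, hk1, hk2⟩ ⟨l, hl1, hl2⟩
        refine ⟨k * l, ?_, ?_⟩
        · rw [← hl1, ← hk1]; simp [mul_assoc]
        · rw [← hk2, ← hl2]; simp [mul_smul] }

/-- The underlying set of the induced `H`-set `ind_K^H X`. -/
def IndType (H : Type) [Group H] (K : Subgroup H) (X : Type)
    (a : MulAction K X) : Type :=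
  Quotient (indSetoid H K X a)

instance (H : Type) [Group H] [Finite H] (K : Subgroup H) (X : Type)
    [Finite X] (a : MulAction K X) : Finite (IndType H K X a) :=
  Quotient.finite _

/-- The `H`-action on the induced `H`-set `ind_K^H X`. -/
def indAction (H : Type) [Group H] (K : Subgroup H) (X : Type)
    (a : MulAction K X) : MulAction H (IndType H K X a) where
  smul h := Quotient.map (fun p => (h * p.1, p.2))
    (by rintro p q ⟨k, hk1, hk2⟩; exact ⟨k, by rw [mul_assoc, hk1], hk2⟩)
  one_smul t := Quotient.inductionOn t fun p => by
    show Quotient.map _ _ ⟦p⟧ = ⟦p⟧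
    simp
  mul_smul g h t := Quotient.inductionOn t fun p => by
    show Quotient.map _ _ ⟦p⟧ = Quotient.map _ _ (Quotient.map _ _ ⟦p⟧)
    simp [mul_assoc]

/-- A `G`-indexing system: for each subgroup `H ≤ G` a class of finite `H`-sets
containing all trivial sets and closed under isomorphism, restriction,
conjugation, subobjects, finite coproducts, and self-induction. -/
structure IndexingSystem (G : Type) [Group G] [Finite G] where
  mem : ∀ (H : Subgroup G) (X : Type), Finite X → MulAction H X → Prop
  mem_trivial : ∀ (H : Subgroup G) (X : Type) (fX : Finite X),
    mem H X fX (trivialSMul H X)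
  mem_iso : ∀ (H : Subgroup G) (X Y : Type) (fX : Finite X) (fY : Finite Y)
    (aX : MulAction H X) (aY : MulAction H Y) (e : X ≃ Y),
    IsEquivariant aX aY e → mem H X fX aX → mem H Y fY aY
  mem_res : ∀ (K H : Subgroup G) (hKH : K ≤ H) (X : Type) (fX : Finite X)
    (aX : MulAction H X), mem H X fX aX →
    mem K X fX (resAction (Subgroup.inclusion hKH) X aX)
  mem_conj : ∀ (H : Subgroup G) (g : G) (X : Type) (fX : Finite X)
    (aX : MulAction H X), mem H X fX aX →
    mem (conjS g H) X fX
      (resAction ((Subgroup.equivSMul (MulAut.conj g) H).symm.toMonoidHom) X aX)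
  mem_sub : ∀ (H : Subgroup G) (X Y : Type) (fX : Finite X) (fY : Finite Y)
    (aX : MulAction H X) (aY : MulAction H Y) (f : X → Y),
    Function.Injective f → IsEquivariant aX aY f →
    mem H Y fY aY → mem H X fX aX
  mem_sum : ∀ (H : Subgroup G) (X Y : Type) (fX : Finite X) (fY : Finite Y)
    (aX : MulAction H X) (aY : MulAction H Y),
    mem H X fX aX → mem H Y fY aY →
    mem H (X ⊕ Y) inferInstance (sumAction aX aY)
  mem_selfind : ∀ (K H : Subgroup G) (hKH : K ≤ H) (X : Type) (fX : Finite X)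
    (aX : MulAction K X),
    mem K X fX aX →
    mem H (H ⧸ K.subgroupOf H) inferInstance inferInstance →
    mem H (IndType H (K.subgroupOf H) X
        (resAction (Subgroup.subgroupOfEquivOfLe hKH).toMonoidHom X aX))
      inferInstance
      (indAction H (K.subgroupOf H) X
        (resAction (Subgroup.subgroupOfEquivOfLe hKH).toMonoidHom X aX))

/-- The graph of an indexing system: `K →_I H` iff `K ≤ H` and the orbit
`H/K` is admissible for `I`. -/
def IndexingSystem.grel {G : Type} [Group G] [Finite G] (I : IndexingSystem G)
    (K H : Subgroup G) : Prop :=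
  K ≤ H ∧ I.mem H (H ⧸ K.subgroupOf H) inferInstance inferInstance

/-- A `G`-transfer system: a partial order on the subgroups of `G` refining
inclusion, closed under conjugation and restriction. -/
structure TransferSystem (G : Type) [Group G] where
  rel : Subgroup G → Subgroup G → Prop
  le_of_rel : ∀ K H : Subgroup G, rel K H → K ≤ H
  refl : ∀ H : Subgroup G, rel H H
  antisymm : ∀ K H : Subgroup G, rel K H → rel H K → K = H
  trans : ∀ J K H : Subgroup G, rel J K → rel K H → rel J H
  conj : ∀ (K H : Subgroup G) (g : G), rel K H → rel (conjS g K) (conjS g H)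
  res : ∀ K H L : Subgroup G, rel K H → L ≤ H → rel (K ⊓ L) L

/-- The componentwise action on a disjoint union (sigma type) of actions. -/
def sigmaAction {H : Type} [Group H] {ι : Type} {f : ι → Type}
    (a : ∀ i, MulAction H (f i)) : MulAction H (Σ i, f i) where
  smul h p := ⟨p.1, actSMul (a p.1) h p.2⟩
  one_smul := by rintro ⟨i, x⟩; exact congrArg (Sigma.mk i) ((a i).one_smul x)
  mul_smul := by rintro g h ⟨i, x⟩; exact congrArg (Sigma.mk i) ((a i).mul_smul g h x)

/-- `OrbitCoprod T H X aX` says that the finite `H`-set `X` is isomorphic to a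
finite disjoint union of orbits `H/K` with `K → H` in the transfer system
`T`. -/
def OrbitCoprod {G : Type} [Group G] [Finite G] (T : TransferSystem G)
    (H : Subgroup G) (X : Type) (aX : MulAction H X) : Prop :=
  ∃ (n : ℕ) (K : Fin n → Subgroup G), (∀ i, T.rel (K i) H) ∧
    ∃ e : X ≃ Σ i : Fin n, (H ⧸ (K i).subgroupOf H),
      IsEquivariant aX (sigmaAction fun _ => inferInstance) e
section Aux
variable {G : Type} [Group G]

lemma mem_conjS {g x : G} {P : Subgroup G} : x ∈ conjS g P ↔ g⁻¹ * x * g ∈ P := by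
  rw [conjS, Subgroup.mem_pointwise_smul_iff_inv_smul_mem]
  constructor
  · intro h; convert h using 1; rw [MulAut.smul_def, MulAut.conj_inv_apply]
  · intro h; convert h using 1; rw [MulAut.smul_def, MulAut.conj_inv_apply]

lemma conjS_self {h : G} {H : Subgroup G} (hh : h ∈ H) : conjS h H = H := by
  ext x
  rw [mem_conjS]
  constructor
  · intro hx
    have : x = h * (h⁻¹ * x * h) * h⁻¹ := by group
    rw [this]; exact H.mul_mem (H.mul_mem hh hx) (H.inv_mem hh)
  · intro hx; exact H.mul_mem (H.mul_mem (H.inv_mem hh) hx) hh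

/-- The stabilizer of `x` under `aX`, viewed as a subgroup of `G`. -/
def stabG (H : Subgroup G) {X : Type} (aX : MulAction ↥H X) (x : X) : Subgroup G :=
  Subgroup.map H.subtype (letI := aX; MulAction.stabilizer ↥H x)

lemma mem_stabG {H : Subgroup G} {X : Type} {aX : MulAction ↥H X} {x : X} {g : G} :
    g ∈ stabG H aX x ↔ ∃ hg : g ∈ H, actSMul aX ⟨g, hg⟩ x = x := by
  rw [stabG, Subgroup.mem_map]
  constructor
  · rintro ⟨⟨y, hy⟩, hs, rfl⟩
    exact ⟨hy, hs⟩
  · rintro ⟨hg, hs⟩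
    exact ⟨⟨g, hg⟩, hs, rfl⟩

lemma stabG_le {H : Subgroup G} {X : Type} (aX : MulAction ↥H X) (x : X) :
    stabG H aX x ≤ H := by
  rw [stabG]; exact Subgroup.map_subtype_le _

lemma subgroupOf_stabG {H : Subgroup G} {X : Type} (aX : MulAction ↥H X) (x : X) :
    (stabG H aX x).subgroupOf H = (letI := aX; MulAction.stabilizer ↥H x) := by
  rw [stabG, Subgroup.subgroupOf]
  exact Subgroup.comap_map_eq_self_of_injective H.subtype_injective _

lemma stabG_of_injective {H : Subgroup G} {X Y : Type} {aX : MulAction ↥H X}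
    {aY : MulAction ↥H Y} {f : X → Y} (hf : Function.Injective f)
    (he : IsEquivariant aX aY f) (x : X) :
    stabG H aX x = stabG H aY (f x) := by
  ext g
  simp only [mem_stabG]
  constructor
  · rintro ⟨hg, hs⟩
    exact ⟨hg, by rw [← he, hs]⟩
  · rintro ⟨hg, hs⟩
    refine ⟨hg, hf ?_⟩
    rw [he, hs]

lemma IsEquivariant.symmE {H X Y : Type} [Group H] {aX : MulAction H X}
    {aY : MulAction H Y} {e : X ≃ Y} (he : IsEquivariant aX aY ⇑e) :
    IsEquivariant aY aX ⇑e.symm := by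
  intro h y
  apply e.injective
  rw [he, Equiv.apply_symm_apply, Equiv.apply_symm_apply]

lemma IsEquivariant.transE {H X Y Z : Type} [Group H] {aX : MulAction H X}
    {aY : MulAction H Y} {aZ : MulAction H Z} {e : X ≃ Y} {f : Y ≃ Z}
    (he : IsEquivariant aX aY ⇑e) (hf : IsEquivariant aY aZ ⇑f) :
    IsEquivariant aX aZ ⇑(e.trans f) := by
  intro h x
  simp only [Equiv.trans_apply]
  rw [he, hf]

end Aux
section Aux2
variable {G : Type} [Group G]

lemma stabG_sigma {H : Subgroup G} {ι : Type} {f : ι → Type}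
    (a : ∀ i, MulAction ↥H (f i)) (i : ι) (x : f i) :
    stabG H (sigmaAction a) ⟨i, x⟩ = stabG H (a i) x := by
  ext g
  simp only [mem_stabG]
  constructor
  · rintro ⟨hg, hs⟩
    refine ⟨hg, ?_⟩
    have : actSMul (sigmaAction a) ⟨g, hg⟩ ⟨i, x⟩ = ⟨i, actSMul (a i) ⟨g, hg⟩ x⟩ := rfl
    rw [this] at hs
    exact eq_of_heq (Sigma.mk.inj_iff.mp hs).2
  · rintro ⟨hg, hs⟩
    refine ⟨hg, ?_⟩
    show (⟨i, actSMul (a i) ⟨g, hg⟩ x⟩ : Σ i, f i) = ⟨i, x⟩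
    rw [hs]

lemma stabG_inl {H : Subgroup G} {X Y : Type} (aX : MulAction ↥H X)
    (aY : MulAction ↥H Y) (x : X) :
    stabG H (sumAction aX aY) (Sum.inl x) = stabG H aX x := by
  ext g
  simp only [mem_stabG]
  constructor
  · rintro ⟨hg, hs⟩
    refine ⟨hg, ?_⟩
    have : actSMul (sumAction aX aY) ⟨g, hg⟩ (Sum.inl x) = Sum.inl (actSMul aX ⟨g, hg⟩ x) := rfl
    rw [this] at hs
    exact Sum.inl_injective hs
  · rintro ⟨hg, hs⟩
    refine ⟨hg, ?_⟩
    show Sum.inl (actSMul aX ⟨g, hg⟩ x) = Sum.inl x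
    rw [hs]

lemma stabG_inr {H : Subgroup G} {X Y : Type} (aX : MulAction ↥H X)
    (aY : MulAction ↥H Y) (y : Y) :
    stabG H (sumAction aX aY) (Sum.inr y) = stabG H aY y := by
  ext g
  simp only [mem_stabG]
  constructor
  · rintro ⟨hg, hs⟩
    refine ⟨hg, ?_⟩
    have : actSMul (sumAction aX aY) ⟨g, hg⟩ (Sum.inr y) = Sum.inr (actSMul aY ⟨g, hg⟩ y) := rfl
    rw [this] at hs
    exact Sum.inr_injective hs
  · rintro ⟨hg, hs⟩
    refine ⟨hg, ?_⟩
    show Sum.inr (actSMul aY ⟨g, hg⟩ y) = Sum.inr y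
    rw [hs]

lemma stabG_res {K H : Subgroup G} (hKH : K ≤ H) {X : Type} (aX : MulAction ↥H X)
    (x : X) :
    stabG K (resAction (Subgroup.inclusion hKH) X aX) x = stabG H aX x ⊓ K := by
  ext g
  simp only [mem_stabG, Subgroup.mem_inf]
  constructor
  · rintro ⟨hg, hs⟩
    refine ⟨⟨hKH hg, ?_⟩, hg⟩
    exact hs
  · rintro ⟨⟨hg, hs⟩, hgK⟩
    refine ⟨hgK, ?_⟩
    have : actSMul (resAction (Subgroup.inclusion hKH) X aX) ⟨g, hgK⟩ x
        = actSMul aX ⟨g, hKH hgK⟩ x := rfl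
    rw [this]
    convert hs using 2

lemma stabG_conj {H : Subgroup G} (g : G) {X : Type} (aX : MulAction ↥H X) (x : X) :
    stabG (conjS g H)
      (resAction ((Subgroup.equivSMul (MulAut.conj g) H).symm.toMonoidHom) X aX) x
      = conjS g (stabG H aX x) := by
  ext y
  rw [mem_conjS]
  erw [mem_stabG]
  simp only [mem_stabG]
  constructor
  · rintro ⟨hy, hs⟩
    have hy' : g⁻¹ * y * g ∈ H := mem_conjS.mp hy
    refine ⟨hy', ?_⟩
    have : actSMul aX ((Subgroup.equivSMul (MulAut.conj g) H).symm.toMonoidHom ⟨y, hy⟩) x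
        = actSMul aX ⟨g⁻¹ * y * g, hy'⟩ x := by
      congr 1
    rw [← this]
    exact hs
  · rintro ⟨hy, hs⟩
    have hy' : y ∈ conjS g H := mem_conjS.mpr hy
    refine ⟨hy', ?_⟩
    have : actSMul (resAction ((Subgroup.equivSMul (MulAut.conj g) H).symm.toMonoidHom) X aX)
        ⟨y, hy'⟩ x = actSMul aX ⟨g⁻¹ * y * g, hy⟩ x := by
      show actSMul aX ((Subgroup.equivSMul (MulAut.conj g) H).symm.toMonoidHom ⟨y, hy'⟩) x = _
      congr 1
    erw [this, hs]

end Aux2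
section Aux3
variable {G : Type} [Group G]

lemma stabG_quot {H : Subgroup G} (K' : Subgroup ↥H) (h : ↥H) :
    stabG H (inferInstance : MulAction ↥H (↥H ⧸ K')) (QuotientGroup.mk h)
      = conjS (↑h) (K'.map H.subtype) := by
  ext g
  rw [mem_conjS, mem_stabG]
  constructor
  · rintro ⟨hg, hs⟩
    have hs' : (QuotientGroup.mk ((⟨g, hg⟩ : ↥H) * h) : ↥H ⧸ K') = QuotientGroup.mk h := hs
    have h2 : ((⟨g, hg⟩ : ↥H) * h)⁻¹ * h ∈ K' := QuotientGroup.eq.mp hs'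
    refine Subgroup.mem_map.mpr ⟨(((⟨g, hg⟩ : ↥H) * h)⁻¹ * h)⁻¹, K'.inv_mem h2, ?_⟩
    show ((((⟨g, hg⟩ : ↥H) * h)⁻¹ * h)⁻¹ : ↥H) = ((h⁻¹ * ⟨g, hg⟩ * h : ↥H) : G)
    push_cast
    group
  · intro hy
    obtain ⟨k, hk, hcoe⟩ := Subgroup.mem_map.mp hy
    simp only [Subgroup.coe_subtype] at hcoe
    have hg : g ∈ H := by
      have := (h * k * h⁻¹ : ↥H).2
      have hcoe2 : ((h * k * h⁻¹ : ↥H) : G) = g := by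
        push_cast
        rw [hcoe]
        group
      rwa [hcoe2] at this
    refine ⟨hg, ?_⟩
    show (QuotientGroup.mk ((⟨g, hg⟩ : ↥H) * h) : ↥H ⧸ K') = QuotientGroup.mk h
    rw [QuotientGroup.eq]
    have : ((⟨g, hg⟩ : ↥H) * h)⁻¹ * h = k⁻¹ := by
      apply Subtype.ext
      push_cast
      rw [hcoe]
      group
    rw [this]
    exact K'.inv_mem hk

lemma stabG_quot' {K H : Subgroup G} (hKH : K ≤ H) (h : ↥H) :
    stabG H (inferInstance : MulAction ↥H (↥H ⧸ K.subgroupOf H)) (QuotientGroup.mk h)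
      = conjS (↑h) K := by
  rw [stabG_quot, Subgroup.subgroupOf_map_subtype, inf_eq_left.mpr hKH]

end Aux3
section Aux4
variable {G : Type} [Group G]

lemma stabG_ind {K H : Subgroup G} (hKH : K ≤ H) {X : Type} (aX : MulAction ↥K X)
    (h : ↥H) (x0 : X) :
    stabG H (indAction ↥H (K.subgroupOf H) X
        (resAction (Subgroup.subgroupOfEquivOfLe hKH).toMonoidHom X aX))
      (Quotient.mk (indSetoid ↥H (K.subgroupOf H) X
        (resAction (Subgroup.subgroupOfEquivOfLe hKH).toMonoidHom X aX)) (h, x0))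
      = conjS (↑h) (stabG K aX x0) := by
  set a' := resAction (Subgroup.subgroupOfEquivOfLe hKH).toMonoidHom X aX with ha'
  ext g
  rw [mem_conjS, mem_stabG]; erw [mem_stabG]
  constructor
  · rintro ⟨hg, hs⟩
    have hs' : Quotient.mk (indSetoid ↥H (K.subgroupOf H) X a') ((⟨g, hg⟩ : ↥H) * h, x0)
        = Quotient.mk (indSetoid ↥H (K.subgroupOf H) X a') (h, x0) := hs
    obtain ⟨k, hk1, hk2⟩ := Quotient.exact hs'
    set s := Subgroup.subgroupOfEquivOfLe hKH k with hsdef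
    have hs0 : actSMul aX s x0 = x0 := hk2
    have hcm := congrArg (fun z : ↥H => (z : G)) hk1
    simp only [Subgroup.coe_mul] at hcm
    have hk1' : ((k : ↥H) : G) = (↑h)⁻¹ * g⁻¹ * ↑h := by
      have h3 : ((k : ↥H) : G) = (↑h)⁻¹ * g⁻¹ * (g * ↑h * ((k : ↥H) : G)) := by group
      rw [hcm] at h3
      exact h3
    have hscoe : ((s⁻¹ : ↥K) : G) = (↑h)⁻¹ * g * ↑h := by
      have hc2 : ((s : ↥K) : G) = ((k : ↥H) : G) := rfl
      push_cast
      rw [hc2, hk1']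
      group
    have hm : (↑h)⁻¹ * g * ↑h ∈ K := by
      have := (s⁻¹ : ↥K).2
      rwa [hscoe] at this
    refine ⟨hm, ?_⟩
    have heq : (⟨(↑h)⁻¹ * g * ↑h, hm⟩ : ↥K) = s⁻¹ := Subtype.ext hscoe.symm
    rw [heq]
    letI := aX
    show s⁻¹ • x0 = x0
    have : s • x0 = x0 := hs0
    rw [inv_smul_eq_iff, this]
  · rintro ⟨hm, hact⟩
    have hg : g ∈ H := by
      have h2 : g = ↑h * ((↑h)⁻¹ * g * ↑h) * (↑h)⁻¹ := by group
      rw [h2]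
      exact H.mul_mem (H.mul_mem h.2 (hKH hm)) (H.inv_mem h.2)
    refine ⟨hg, ?_⟩
    show Quotient.mk (indSetoid ↥H (K.subgroupOf H) X a') ((⟨g, hg⟩ : ↥H) * h, x0)
        = Quotient.mk (indSetoid ↥H (K.subgroupOf H) X a') (h, x0)
    apply Quotient.sound
    set w := (Subgroup.subgroupOfEquivOfLe hKH).symm ((⟨(↑h)⁻¹ * g * ↑h, hm⟩ : ↥K)⁻¹) with hw
    have hwc : ((w : ↥H) : G) = (↑h)⁻¹ * g⁻¹ * ↑h := by
      have : ((w : ↥H) : G) = (((⟨(↑h)⁻¹ * g * ↑h, hm⟩ : ↥K)⁻¹ : ↥K) : G) := rfl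
      rw [this]
      push_cast
      group
    refine ⟨w, ?_, ?_⟩
    · apply Subtype.ext
      simp only [Subgroup.coe_mul]
      show g * ↑h * ((w : ↥H) : G) = (h : G)
      rw [hwc]
      group
    · show actSMul aX (Subgroup.subgroupOfEquivOfLe hKH w) x0 = x0
      rw [hw, MulEquiv.apply_symm_apply]
      letI := aX
      show ((⟨(↑h)⁻¹ * g * ↑h, hm⟩ : ↥K)⁻¹) • x0 = x0
      have : (⟨(↑h)⁻¹ * g * ↑h, hm⟩ : ↥K) • x0 = x0 := hact
      rw [inv_smul_eq_iff, this]

end Aux4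
section Aux5

lemma exists_decomp {H X : Type} [Group H] [Finite X] (a : MulAction H X) :
    ∃ (n : ℕ) (x : Fin n → X)
      (e : X ≃ Σ i : Fin n, H ⧸ (letI := a; MulAction.stabilizer H (x i))),
      IsEquivariant a (sigmaAction fun _ => inferInstance) e := by
  letI := a
  letI : Finite (MulAction.orbitRel.Quotient H X) := Quotient.finite _
  obtain ⟨n, ⟨q⟩⟩ := Finite.exists_equiv_fin (MulAction.orbitRel.Quotient H X)
  refine ⟨n, fun i => (q.symm i).out, ?_⟩
  set x : Fin n → X := fun i => (q.symm i).out with hx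
  have wd : ∀ (i : Fin n) (h h' : H), (QuotientGroup.leftRel (MulAction.stabilizer H (x i))).r h h' →
      h • x i = h' • x i := by
    intro i h h' hr
    rw [QuotientGroup.leftRel_apply] at hr
    have : (h⁻¹ * h') • x i = x i := hr
    calc h • x i = h • ((h⁻¹ * h') • x i) := by rw [this]
    _ = h' • x i := by rw [← mul_smul]; group
  set g : (Σ i : Fin n, H ⧸ MulAction.stabilizer H (x i)) → X :=
    fun p => Quotient.liftOn' p.2 (fun h => h • x p.1) (fun h h' hr => wd p.1 h h' hr) with hg
  have hmk : ∀ (i : Fin n) (h : H), g ⟨i, QuotientGroup.mk h⟩ = h • x i := fun _ _ => rfl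
  have hbij : Function.Bijective g := by
    constructor
    · rintro ⟨i, p⟩ ⟨j, p'⟩ hpq
      induction p using Quotient.inductionOn' with
      | h h =>
      induction p' using Quotient.inductionOn' with
      | h h' =>
      rw [hmk, hmk] at hpq
      have hij : i = j := by
        have horb : x i ∈ MulAction.orbit H (x j) := by
          refine ⟨h⁻¹ * h', ?_⟩
          show (h⁻¹ * h') • x j = x i
          rw [mul_smul, ← hpq, ← mul_smul]
          simp
        have : (Quotient.mk'' (x i) : MulAction.orbitRel.Quotient H X) = Quotient.mk'' (x j) :=
          Quotient.sound' horb
        have hxi : (Quotient.mk'' (x i) : MulAction.orbitRel.Quotient H X) = q.symm i :=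
          Quotient.out_eq _
        have hxj : (Quotient.mk'' (x j) : MulAction.orbitRel.Quotient H X) = q.symm j :=
          Quotient.out_eq _
        have := hxi.symm.trans (this.trans hxj)
        exact q.symm.injective this
      subst hij
      have hst : h⁻¹ * h' ∈ MulAction.stabilizer H (x i) := by
        show (h⁻¹ * h') • x i = x i
        rw [mul_smul, ← hpq, ← mul_smul]
        simp
      have : (QuotientGroup.mk h : H ⧸ MulAction.stabilizer H (x i)) = QuotientGroup.mk h' :=
        QuotientGroup.eq.mpr hst
      exact congrArg (fun p => (⟨i, p⟩ : Σ j : Fin n, H ⧸ MulAction.stabilizer H (x j))) this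
    · intro y
      have hyq : (Quotient.mk'' (x (q (Quotient.mk'' y))) : MulAction.orbitRel.Quotient H X)
          = Quotient.mk'' y := by
        have : (Quotient.mk'' (x (q (Quotient.mk'' y))) : MulAction.orbitRel.Quotient H X)
            = q.symm (q (Quotient.mk'' y)) := Quotient.out_eq _
        rw [this, Equiv.symm_apply_apply]
      have horb : x (q (Quotient.mk'' y)) ∈ MulAction.orbit H y := Quotient.exact' hyq
      obtain ⟨h, hh⟩ := horb
      exact ⟨⟨q (Quotient.mk'' y), QuotientGroup.mk h⁻¹⟩, by
        rw [hmk, ← hh, ← mul_smul]; simp⟩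
  have hequiv : IsEquivariant (sigmaAction fun _ => inferInstance) a g := by
    rintro h ⟨i, p⟩
    induction p using Quotient.inductionOn' with
    | h h' =>
    show g ⟨i, QuotientGroup.mk (h * h')⟩ = h • g ⟨i, QuotientGroup.mk h'⟩
    rw [hmk, hmk, mul_smul]
  refine ⟨(Equiv.ofBijective g hbij).symm, ?_⟩
  have : IsEquivariant (sigmaAction fun _ => inferInstance) a ⇑(Equiv.ofBijective g hbij) :=
    hequiv
  exact this.symmE

end Aux5
section Aux6
variable {G : Type} [Group G]

lemma orbitCoprod_iff [Finite G] (T : TransferSystem G) (H : Subgroup G)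
    (X : Type) (fX : Finite X) (aX : MulAction ↥H X) :
    OrbitCoprod T H X aX ↔ ∀ x : X, T.rel (stabG H aX x) H := by
  constructor
  · rintro ⟨n, K, hK, e, he⟩ x
    have h1 : stabG H aX x = stabG H (sigmaAction fun _ => inferInstance) (e x) :=
      stabG_of_injective e.injective he x
    rcases hex : e x with ⟨i, p⟩
    induction p using Quotient.inductionOn' with
    | h h =>
    rw [hex] at h1
    rw [stabG_sigma] at h1
    have h2 : stabG H (inferInstance : MulAction ↥H (↥H ⧸ (K i).subgroupOf H))
        (QuotientGroup.mk h) = conjS (↑h) (K i) :=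
      stabG_quot' (T.le_of_rel _ _ (hK i)) h
    rw [h2] at h1
    have hrel := T.conj _ _ (↑h) (hK i)
    rw [conjS_self h.2] at hrel
    rw [h1]
    exact hrel
  · intro hstab
    letI := fX
    obtain ⟨n, x, e, he⟩ := exists_decomp aX
    refine ⟨n, fun i => stabG H aX (x i), fun i => hstab (x i),
      e.trans (Equiv.sigmaCongrRight fun i =>
        Subgroup.quotientEquivOfEq (subgroupOf_stabG aX (x i)).symm), ?_⟩
    refine he.transE ?_
    rintro h ⟨i, p⟩
    induction p using Quotient.inductionOn' with
    | h h' =>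
    rfl

end Aux6
section Aux7
variable {G : Type} [Group G]

/-- The indexing system associated to a transfer system. -/
def mkI [Finite G] (T : TransferSystem G) : IndexingSystem G where
  mem H X _ aX := OrbitCoprod T H X aX
  mem_trivial H X fX := by
    show OrbitCoprod T H X (trivialSMul (↥H) X)
    rw [orbitCoprod_iff T H X fX]
    intro x
    have hstab : stabG H (trivialSMul ↥H X) x = H := by
      ext g; rw [mem_stabG]
      exact ⟨fun ⟨hg, _⟩ => hg, fun hg => ⟨hg, rfl⟩⟩
    rw [hstab]; exact T.refl H
  mem_iso H X Y fX fY aX aY e he h := by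
    show OrbitCoprod T H Y aY
    replace h : OrbitCoprod T H X aX := h
    rw [orbitCoprod_iff T H Y fY]
    rw [orbitCoprod_iff T H X fX] at h
    intro y
    have h1 : stabG H aX (e.symm y) = stabG H aY (e (e.symm y)) :=
      stabG_of_injective e.injective he _
    rw [Equiv.apply_symm_apply] at h1
    rw [← h1]; exact h _
  mem_res K H hKH X fX aX h := by
    show OrbitCoprod T K X (resAction (Subgroup.inclusion hKH) X aX)
    replace h : OrbitCoprod T H X aX := h
    rw [orbitCoprod_iff T K X fX]
    rw [orbitCoprod_iff T H X fX] at h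
    intro x
    rw [stabG_res hKH]
    exact T.res _ _ _ (h x) hKH
  mem_conj H g X fX aX h := by
    show OrbitCoprod T (conjS g H) X (resAction (Subgroup.equivSMul (MulAut.conj g) H).symm.toMonoidHom X aX)
    replace h : OrbitCoprod T H X aX := h
    refine (orbitCoprod_iff T (conjS g H) X fX _).mpr ?_
    rw [orbitCoprod_iff T H X fX] at h
    intro x
    rw [stabG_conj g aX x]
    exact T.conj _ _ g (h x)
  mem_sub H X Y fX fY aX aY f hf he h := by
    show OrbitCoprod T H X aX
    replace h : OrbitCoprod T H Y aY := h
    rw [orbitCoprod_iff T H X fX]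
    rw [orbitCoprod_iff T H Y fY] at h
    intro x
    rw [stabG_of_injective hf he x]
    exact h (f x)
  mem_sum H X Y fX fY aX aY hX hY := by
    show OrbitCoprod T H (X ⊕ Y) (sumAction aX aY)
    replace hX : OrbitCoprod T H X aX := hX
    replace hY : OrbitCoprod T H Y aY := hY
    rw [orbitCoprod_iff T H (X ⊕ Y) inferInstance]
    rw [orbitCoprod_iff T H X fX] at hX
    rw [orbitCoprod_iff T H Y fY] at hY
    rintro (x | y)
    · rw [stabG_inl]; exact hX x
    · rw [stabG_inr]; exact hY y
  mem_selfind K H hKH X fX aX hX hQ := by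
    show OrbitCoprod T H _ (indAction (↥H) (K.subgroupOf H) X (resAction (Subgroup.subgroupOfEquivOfLe hKH).toMonoidHom X aX))
    replace hX : OrbitCoprod T K X aX := hX
    replace hQ : OrbitCoprod T H (↥H ⧸ K.subgroupOf H) inferInstance := hQ
    rw [orbitCoprod_iff T H _ inferInstance]
    rw [orbitCoprod_iff T K X fX] at hX
    rw [orbitCoprod_iff T H _ inferInstance] at hQ
    have hKrel : T.rel K H := by
      have h1 := hQ (QuotientGroup.mk (1 : ↥H))
      rw [stabG_quot' hKH 1, OneMemClass.coe_one, conjS_self K.one_mem] at h1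
      exact h1
    intro t
    induction t using Quotient.inductionOn with
    | h p =>
    obtain ⟨h, x0⟩ := p
    rw [stabG_ind hKH aX h x0]
    have h1 := T.trans _ _ _ (hX x0) hKrel
    have h2 := T.conj _ _ (↑h) h1
    rwa [conjS_self h.2] at h2

lemma grel_mkI [Finite G] (T : TransferSystem G) (K H : Subgroup G) :
    (mkI T).grel K H ↔ T.rel K H := by
  constructor
  · rintro ⟨hKH, hmem⟩
    have hmem' : OrbitCoprod T H (↥H ⧸ K.subgroupOf H) inferInstance := hmem
    have h1 := (orbitCoprod_iff T H _ inferInstance _).mp hmem' (QuotientGroup.mk (1 : ↥H))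
    rwa [stabG_quot' hKH 1, OneMemClass.coe_one, conjS_self K.one_mem] at h1
  · intro hrel
    refine ⟨T.le_of_rel _ _ hrel, ?_⟩
    show OrbitCoprod T H (↥H ⧸ K.subgroupOf H) inferInstance
    rw [orbitCoprod_iff T H _ inferInstance]
    intro q
    induction q using Quotient.inductionOn' with
    | h h =>
    have h2 : stabG H (inferInstance : MulAction ↥H (↥H ⧸ K.subgroupOf H))
        (QuotientGroup.mk h) = conjS (↑h) K := stabG_quot' (T.le_of_rel _ _ hrel) h
    rw [h2]
    have h3 := T.conj _ _ (↑h) hrel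
    rwa [conjS_self h.2] at h3

end Aux7
section Aux8
variable {G : Type} [Group G]

def finSumEquiv {n : ℕ} (f : Fin (n + 1) → Type) :
    (f 0 ⊕ Σ i : Fin n, f i.succ) ≃ Σ i : Fin (n + 1), f i where
  toFun p := match p with
    | Sum.inl x => ⟨0, x⟩
    | Sum.inr ⟨i, x⟩ => ⟨i.succ, x⟩
  invFun p := Fin.cases (motive := fun j => f j → (f 0 ⊕ Σ i : Fin n, f i.succ))
    (fun x => Sum.inl x) (fun j x => Sum.inr ⟨j, x⟩) p.1 p.2
  left_inv := by
    rintro (x | ⟨i, x⟩) <;> simp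
  right_inv := by
    rintro ⟨i, x⟩
    revert x
    refine Fin.cases ?_ ?_ i
    · intro x; simp
    · intro j x; simp

lemma mem_sigma_aux [Finite G] (J : IndexingSystem G) (H : Subgroup G) :
    ∀ (n : ℕ) (f : Fin n → Type) (fin : ∀ i, Finite (f i)) (a : ∀ i, MulAction ↥H (f i)),
      (∀ i, J.mem H (f i) (fin i) (a i)) →
      J.mem H (Σ i, f i) inferInstance (sigmaAction a) := by
  intro n
  induction n with
  | zero =>
    intro f fin a _
    have base := J.mem_trivial H (Σ i, f i) inferInstance
    refine J.mem_iso H _ _ inferInstance inferInstance (trivialSMul ↥H (Σ i, f i))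
      (sigmaAction a) (Equiv.refl _) ?_ base
    intro h x
    exact x.1.elim0
  | succ n ih =>
    intro f fin a h
    have h0 : J.mem H (f 0) (fin 0) (a 0) := h 0
    have hrest := ih (fun i : Fin n => f i.succ) (fun i : Fin n => fin i.succ) (fun i : Fin n => a i.succ)
      (fun i : Fin n => h i.succ)
    have hsum := J.mem_sum H _ _ (fin 0) inferInstance (a 0)
      (sigmaAction fun i : Fin n => a i.succ) h0 hrest
    refine J.mem_iso H _ _ inferInstance inferInstance
      (sumAction (a 0) (sigmaAction fun i : Fin n => a i.succ)) (sigmaAction a)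
      (finSumEquiv f) ?_ hsum
    rintro h' (x | ⟨i, x⟩) <;> rfl

lemma uniq_mem [Finite G] (T : TransferSystem G) (J : IndexingSystem G)
    (hJ : ∀ K H : Subgroup G, J.grel K H ↔ T.rel K H)
    (H : Subgroup G) (X : Type) (fX : Finite X) (aX : MulAction ↥H X) :
    J.mem H X fX aX ↔ OrbitCoprod T H X aX := by
  constructor
  · intro h
    rw [orbitCoprod_iff T H X fX]
    intro x
    letI := aX
    have wd : ∀ a b : ↥H,
        (QuotientGroup.leftRel ((stabG H aX x).subgroupOf H)).r a b → a • x = b • x := by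
      intro a b hr
      rw [QuotientGroup.leftRel_apply, subgroupOf_stabG] at hr
      have h2 : (a⁻¹ * b) • x = x := hr
      calc a • x = a • ((a⁻¹ * b) • x) := by rw [h2]
      _ = b • x := by rw [← mul_smul]; group
    set f : (↥H ⧸ (stabG H aX x).subgroupOf H) → X :=
      fun q => Quotient.liftOn' q (fun a => a • x) wd with hf
    have hmk : ∀ a : ↥H, f (QuotientGroup.mk a) = a • x := fun _ => rfl
    have hinj : Function.Injective f := by
      intro p q hpq
      induction p using Quotient.inductionOn' with
      | h a =>
      induction q using Quotient.inductionOn' with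
      | h b =>
      rw [hmk, hmk] at hpq
      have hst : a⁻¹ * b ∈ (stabG H aX x).subgroupOf H := by
        rw [subgroupOf_stabG]
        show (a⁻¹ * b) • x = x
        rw [mul_smul, ← hpq, ← mul_smul]
        simp
      exact QuotientGroup.eq.mpr hst
    have hequiv : IsEquivariant
        (inferInstance : MulAction ↥H (↥H ⧸ (stabG H aX x).subgroupOf H)) aX f := by
      intro h' q
      induction q using Quotient.inductionOn' with
      | h a =>
      show f (QuotientGroup.mk (h' * a)) = h' • f (QuotientGroup.mk a)
      rw [hmk, hmk, mul_smul]
    have hsub := J.mem_sub H _ X inferInstance fX inferInstance aX f hinj hequiv h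
    exact (hJ _ _).mp ⟨stabG_le aX x, hsub⟩
  · rintro ⟨n, K, hK, e, he⟩
    have hKmem : ∀ i, J.mem H (↥H ⧸ (K i).subgroupOf H) inferInstance inferInstance :=
      fun i => ((hJ _ _).mpr (hK i)).2
    have hsig := mem_sigma_aux J H n (fun i => ↥H ⧸ (K i).subgroupOf H)
      (fun _ => inferInstance) (fun _ => inferInstance) hKmem
    exact J.mem_iso H _ X inferInstance fX (sigmaAction fun _ => inferInstance) aX
      e.symm he.symmE hsig

lemma IndexingSystem.ext' [Finite G] {I J : IndexingSystem G} (h : I.mem = J.mem) : I = J := by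
  cases I
  cases J
  cases h
  rfl

end Aux8

theorem stmt3 {G : Type} [Group G] [Finite G] (T : TransferSystem G) :
    ∃ I : IndexingSystem G,
      (∀ (H : Subgroup G) (X : Type) (fX : Finite X) (aX : MulAction H X),
        I.mem H X fX aX ↔ OrbitCoprod T H X aX) ∧
      (∀ K H : Subgroup G, I.grel K H ↔ T.rel K H) ∧
      (∀ J : IndexingSystem G, (∀ K H : Subgroup G, J.grel K H ↔ T.rel K H) →
        J = I) := by
  refine ⟨mkI T, fun H X fX aX => Iff.rfl, grel_mkI T, ?_⟩
  intro J hJ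
  apply IndexingSystem.ext'
  funext H X fX aX
  exact propext (uniq_mem T J hJ H X fX aX)
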